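/- With the notation of the ensemble Kalman particle filter, for γ ∈ (0,1) define the unnormalized weights w_j(γ) = φ(y; H ν_j(γ), H Q_γ H' + R/(1−γ)), where φ is the multivariate Gaussian density, ν_j(γ) = x^p_j + K_γ(y − H x^p_j), Q_γ = (1/γ) K_γ R K_γ', and K_γ = γ P̂ H'(γ H P̂ H' + R)⁻¹. Then as γ → 1⁻, the normalized weights α_j(γ) = w_j(γ)/Σ_k w_k(γ) converge to 1/N for each j. -/

import Mathlib

set_option maxHeartbeats 1000000


open Matrix Filter Topology


section helpers

variable {X : Type*} [TopologicalSpace X] {l : Filter X}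

lemma tendsto_matmul {a b c : ℕ} {f : X → Matrix (Fin a) (Fin b) ℝ}
    {g : X → Matrix (Fin b) (Fin c) ℝ} {A : Matrix (Fin a) (Fin b) ℝ}
    {B : Matrix (Fin b) (Fin c) ℝ} (hf : Tendsto f l (nhds A))
    (hg : Tendsto g l (nhds B)) : Tendsto (fun x => f x * g x) l (nhds (A * B)) :=
  ((continuous_fst.matrix_mul continuous_snd).tendsto (A, B)).comp (hf.prodMk_nhds hg)

lemma tendsto_mulVec' {a b : ℕ} {f : X → Matrix (Fin a) (Fin b) ℝ}
    {g : X → Fin b → ℝ} {A : Matrix (Fin a) (Fin b) ℝ} {B : Fin b → ℝ}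
    (hf : Tendsto f l (nhds A)) (hg : Tendsto g l (nhds B)) :
    Tendsto (fun x => f x *ᵥ g x) l (nhds (A *ᵥ B)) :=
  ((continuous_fst.matrix_mulVec continuous_snd).tendsto (A, B)).comp (hf.prodMk_nhds hg)

lemma tendsto_dotProduct' {a : ℕ} {f g : X → Fin a → ℝ} {A B : Fin a → ℝ}
    (hf : Tendsto f l (nhds A)) (hg : Tendsto g l (nhds B)) :
    Tendsto (fun x => f x ⬝ᵥ g x) l (nhds (A ⬝ᵥ B)) :=
  ((continuous_fst.dotProduct continuous_snd).tendsto (A, B)).comp (hf.prodMk_nhds hg)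

lemma tendsto_transpose' {a b : ℕ} {f : X → Matrix (Fin a) (Fin b) ℝ}
    {A : Matrix (Fin a) (Fin b) ℝ} (hf : Tendsto f l (nhds A)) :
    Tendsto (fun x => (f x)ᵀ) l (nhds Aᵀ) :=
  ((continuous_id.matrix_transpose).tendsto A).comp hf

lemma tendsto_matinv {a : ℕ} {f : X → Matrix (Fin a) (Fin a) ℝ}
    {A : Matrix (Fin a) (Fin a) ℝ} (hf : Tendsto f l (nhds A))
    (hA : A.det ≠ 0) : Tendsto (fun x => (f x)⁻¹) l (nhds A⁻¹) := by
  have hdet : Tendsto (fun x => (f x).det) l (nhds A.det) :=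
    ((continuous_id.matrix_det).tendsto A).comp hf
  have hadj : Tendsto (fun x => (f x).adjugate) l (nhds A.adjugate) :=
    ((continuous_id.matrix_adjugate).tendsto A).comp hf
  have h := (hdet.inv₀ hA).smul hadj
  simpa only [Matrix.inv_def, Ring.inverse_eq_inv'] using h

lemma psd_smul {n : ℕ} {A : Matrix (Fin n) (Fin n) ℝ} (hA : A.PosSemidef) {c : ℝ}
    (hc : 0 ≤ c) : (c • A).PosSemidef := by
  refine ⟨?_, fun x => ?_⟩
  · unfold Matrix.IsHermitian
    rw [conjTranspose_smul, hA.1.eq]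
    simp
  · exact (hA.smul hc).2 x

lemma pd_smul {n : ℕ} {A : Matrix (Fin n) (Fin n) ℝ} (hA : A.PosDef) {c : ℝ}
    (hc : 0 < c) : (c • A).PosDef := by
  refine ⟨?_, fun x hx => ?_⟩
  · unfold Matrix.IsHermitian
    rw [conjTranspose_smul, hA.1.eq]
    simp
  · exact (hA.smul hc).2 hx

lemma psd_conj {a b : ℕ} {A : Matrix (Fin a) (Fin a) ℝ} (hA : A.PosSemidef)
    (B : Matrix (Fin b) (Fin a) ℝ) : (B * A * Bᵀ).PosSemidef := by
  simpa [Matrix.conjTranspose_eq_transpose_of_trivial] using hA.mul_mul_conjTranspose_same B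

end helpers

/-- The multivariate normal density `φ(x; μ, Σ)`. -/
noncomputable def gpdf {n : ℕ} (x μ : Fin n → ℝ) (S : Matrix (Fin n) (Fin n) ℝ) : ℝ :=
  (2 * Real.pi) ^ (-(n : ℝ) / 2) * S.det ^ (-(1 : ℝ) / 2) *
    Real.exp (-(1 / 2) * ((x - μ) ⬝ᵥ (S⁻¹ *ᵥ (x - μ))))

/-- As `γ → 1⁻`, the normalized EnKPF weights converge to the uniform weights `1/N`. -/
theorem enkpf_weights_gamma_to_one {q r N : ℕ} (hN : 0 < N)
    (Phat : Matrix (Fin q) (Fin q) ℝ) (H : Matrix (Fin r) (Fin q) ℝ)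
    (R : Matrix (Fin r) (Fin r) ℝ)
    (hP : Phat.PosSemidef) (hR : R.PosDef)
    (xp : Fin N → Fin q → ℝ) (y : Fin r → ℝ)
    (K : ℝ → Matrix (Fin q) (Fin r) ℝ)
    (hK : ∀ γ, K γ = γ • (Phat * Hᵀ * (γ • (H * Phat * Hᵀ) + R)⁻¹))
    (ν : ℝ → Fin N → Fin q → ℝ)
    (hν : ∀ γ j, ν γ j = xp j + K γ *ᵥ (y - H *ᵥ xp j))
    (Q : ℝ → Matrix (Fin q) (Fin q) ℝ)
    (hQ : ∀ γ, Q γ = γ⁻¹ • (K γ * R * (K γ)ᵀ))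
    (w : ℝ → Fin N → ℝ)
    (hw : ∀ γ j, w γ j = gpdf y (H *ᵥ ν γ j) (H * Q γ * Hᵀ + (1 - γ)⁻¹ • R))
    (α : ℝ → Fin N → ℝ)
    (hα : ∀ γ j, α γ j = w γ j / ∑ k, w γ k) :
    ∀ j, Tendsto (fun γ => α γ j) (nhdsWithin 1 (Set.Ioo 0 1)) (nhds (1 / (N : ℝ))) := by
  intro j
  set l := nhdsWithin (1:ℝ) (Set.Ioo 0 1) with hl
  set S : Matrix (Fin r) (Fin r) ℝ := H * Phat * Hᵀ with hS
  set K1 : Matrix (Fin q) (Fin r) ℝ := Phat * Hᵀ * (S + R)⁻¹ with hK1def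
  have hγ : Tendsto (fun γ : ℝ => γ) l (nhds 1) := tendsto_id.mono_left nhdsWithin_le_nhds
  have h1γ : Tendsto (fun γ : ℝ => 1 - γ) l (nhds 0) := by
    have h := (tendsto_const_nhds (x := (1:ℝ)) (f := l)).sub hγ
    simpa using h
  have hSpsd : S.PosSemidef := psd_conj hP H
  have hSR : (S + R).PosDef := Matrix.PosDef.posSemidef_add hSpsd hR
  -- limit of K
  have hKt : Tendsto K l (nhds K1) := by
    have t1 : Tendsto (fun γ : ℝ => γ • S + R) l (nhds (S + R)) := by
      have h := (hγ.smul (tendsto_const_nhds (x := S) (f := l))).add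
        (tendsto_const_nhds (x := R) (f := l))
      simpa using h
    have t2 := tendsto_matinv t1 hSR.det_pos.ne'
    have t3 := tendsto_matmul (tendsto_const_nhds (x := Phat * Hᵀ) (f := l)) t2
    have t4 := hγ.smul t3
    rw [one_smul] at t4
    exact t4.congr fun γ => (hK γ).symm
  -- limit of Q
  have hQt : Tendsto Q l (nhds (K1 * R * K1ᵀ)) := by
    have tK : Tendsto (fun γ => K γ * R * (K γ)ᵀ) l (nhds (K1 * R * K1ᵀ)) :=
      tendsto_matmul (tendsto_matmul hKt tendsto_const_nhds) (tendsto_transpose' hKt)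
    have hγinv : Tendsto (fun γ : ℝ => γ⁻¹) l (nhds 1) := by
      simpa using hγ.inv₀ one_ne_zero
    have h := hγinv.smul tK
    rw [one_smul] at h
    exact h.congr fun γ => (hQ γ).symm
  have hBt : Tendsto (fun γ => H * Q γ * Hᵀ) l (nhds (H * (K1 * R * K1ᵀ) * Hᵀ)) :=
    tendsto_matmul (tendsto_matmul tendsto_const_nhds hQt) tendsto_const_nhds
  -- M γ = (1-γ) • (H Q Hᵀ) + R  tends to R
  have hMt : Tendsto (fun γ => (1 - γ) • (H * Q γ * Hᵀ) + R) l (nhds R) := by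
    have h := (h1γ.smul hBt).add (tendsto_const_nhds (x := R) (f := l))
    simpa using h
  have hMinv : Tendsto (fun γ => ((1 - γ) • (H * Q γ * Hᵀ) + R)⁻¹) l (nhds R⁻¹) :=
    tendsto_matinv hMt hR.det_pos.ne'
  have hSinv0 : Tendsto (fun γ => (1 - γ) • ((1 - γ) • (H * Q γ * Hᵀ) + R)⁻¹) l (nhds 0) := by
    have h := h1γ.smul hMinv
    simpa using h
  -- pointwise facts on Ioo 0 1
  have hQpsd : ∀ γ ∈ Set.Ioo (0:ℝ) 1, (Q γ).PosSemidef := by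
    intro γ hγm
    rw [hQ γ]
    exact psd_smul (psd_conj hR.posSemidef (K γ)) (inv_nonneg.2 hγm.1.le)
  have hBpsd : ∀ γ ∈ Set.Ioo (0:ℝ) 1, (H * Q γ * Hᵀ).PosSemidef :=
    fun γ hγm => psd_conj (hQpsd γ hγm) H
  have hSigpd : ∀ γ ∈ Set.Ioo (0:ℝ) 1, (H * Q γ * Hᵀ + (1 - γ)⁻¹ • R).PosDef := by
    intro γ hγm
    exact Matrix.PosDef.posSemidef_add (hBpsd γ hγm)
      (pd_smul hR (inv_pos.2 (by linarith [hγm.2])))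
  have hMpd : ∀ γ ∈ Set.Ioo (0:ℝ) 1, ((1 - γ) • (H * Q γ * Hᵀ) + R).PosDef := by
    intro γ hγm
    exact Matrix.PosDef.posSemidef_add (psd_smul (hBpsd γ hγm) (by linarith [hγm.2])) hR
  have hSiginv_eq : ∀ γ ∈ Set.Ioo (0:ℝ) 1,
      (H * Q γ * Hᵀ + (1 - γ)⁻¹ • R)⁻¹ = (1 - γ) • ((1 - γ) • (H * Q γ * Hᵀ) + R)⁻¹ := by
    intro γ hγm
    have h10 : (1 - γ) ≠ 0 := by linarith [hγm.2]
    have hMSig : H * Q γ * Hᵀ + (1 - γ)⁻¹ • R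
        = (1 - γ)⁻¹ • ((1 - γ) • (H * Q γ * Hᵀ) + R) := by
      rw [smul_add, smul_smul, inv_mul_cancel₀ h10, one_smul]
    rw [hMSig]
    haveI : Invertible ((1 - γ)⁻¹) := invertibleOfNonzero (inv_ne_zero h10)
    rw [Matrix.inv_smul (A := (1 - γ) • (H * Q γ * Hᵀ) + R) ((1 - γ)⁻¹) (hMpd γ hγm).det_pos.ne'.isUnit, invOf_eq_inv, inv_inv]
  have hSiginv : Tendsto (fun γ => (H * Q γ * Hᵀ + (1 - γ)⁻¹ • R)⁻¹) l (nhds 0) := by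
    refine hSinv0.congr' ?_
    filter_upwards [eventually_mem_nhdsWithin] with γ hγm
    exact (hSiginv_eq γ hγm).symm
  -- limit of the deviations
  have hd : ∀ k : Fin N, Tendsto (fun γ => y - H *ᵥ ν γ k) l
      (nhds (y - H *ᵥ (xp k + K1 *ᵥ (y - H *ᵥ xp k)))) := by
    intro k
    have hν' : Tendsto (fun γ => ν γ k) l (nhds (xp k + K1 *ᵥ (y - H *ᵥ xp k))) := by
      have h := (tendsto_const_nhds (x := xp k) (f := l)).add
        (tendsto_mulVec' hKt (tendsto_const_nhds (x := y - H *ᵥ xp k) (f := l)))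
      exact h.congr fun γ => (hν γ k).symm
    exact (tendsto_const_nhds (x := y) (f := l)).sub
      (tendsto_mulVec' tendsto_const_nhds hν')
  -- the exponential factors tend to 1
  have he : ∀ k : Fin N, Tendsto (fun γ => Real.exp (-(1/2 : ℝ) *
      ((y - H *ᵥ ν γ k) ⬝ᵥ ((H * Q γ * Hᵀ + (1 - γ)⁻¹ • R)⁻¹ *ᵥ (y - H *ᵥ ν γ k)))))
      l (nhds 1) := by
    intro k
    have hinner : Tendsto (fun γ => (y - H *ᵥ ν γ k) ⬝ᵥ
        ((H * Q γ * Hᵀ + (1 - γ)⁻¹ • R)⁻¹ *ᵥ (y - H *ᵥ ν γ k))) l (nhds 0) := by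
      have h := tendsto_dotProduct' (hd k) (tendsto_mulVec' hSiginv (hd k))
      simpa using h
    have h0 : Tendsto (fun γ => -(1/2 : ℝ) *
        ((y - H *ᵥ ν γ k) ⬝ᵥ ((H * Q γ * Hᵀ + (1 - γ)⁻¹ • R)⁻¹ *ᵥ (y - H *ᵥ ν γ k))))
        l (nhds 0) := by
      have h := (tendsto_const_nhds (x := -(1/2:ℝ)) (f := l)).mul hinner
      simpa using h
    have h := (Real.continuous_exp.tendsto 0).comp h0
    simpa [Function.comp_def] using h
  -- sum of exponentials tends to N
  have hesum : Tendsto (fun γ => ∑ k, Real.exp (-(1/2 : ℝ) *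
      ((y - H *ᵥ ν γ k) ⬝ᵥ ((H * Q γ * Hᵀ + (1 - γ)⁻¹ • R)⁻¹ *ᵥ (y - H *ᵥ ν γ k)))))
      l (nhds N) := by
    have h := tendsto_finset_sum (Finset.univ : Finset (Fin N)) (fun k _ => he k)
    simpa using h
  have hNne : (N : ℝ) ≠ 0 := Nat.cast_ne_zero.2 hN.ne'
  have hquot := (he j).div hesum hNne
  refine hquot.congr' ?_
  filter_upwards [eventually_mem_nhdsWithin] with γ hγm
  -- rewrite α in terms of the exponentials
  have hc_pos : 0 < (2 * Real.pi) ^ (-(r : ℝ) / 2) *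
      (H * Q γ * Hᵀ + (1 - γ)⁻¹ • R).det ^ (-(1:ℝ) / 2) :=
    mul_pos (Real.rpow_pos_of_pos (by positivity) _)
      (Real.rpow_pos_of_pos (hSigpd γ hγm).det_pos _)
  have hwk : ∀ k, w γ k = ((2 * Real.pi) ^ (-(r : ℝ) / 2) *
      (H * Q γ * Hᵀ + (1 - γ)⁻¹ • R).det ^ (-(1:ℝ) / 2)) *
      Real.exp (-(1/2 : ℝ) *
      ((y - H *ᵥ ν γ k) ⬝ᵥ ((H * Q γ * Hᵀ + (1 - γ)⁻¹ • R)⁻¹ *ᵥ (y - H *ᵥ ν γ k)))) := by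
    intro k
    rw [hw γ k, gpdf]
  rw [hα γ j, hwk j]
  have hsum : ∑ k, w γ k = ((2 * Real.pi) ^ (-(r : ℝ) / 2) *
      (H * Q γ * Hᵀ + (1 - γ)⁻¹ • R).det ^ (-(1:ℝ) / 2)) *
      ∑ k, Real.exp (-(1/2 : ℝ) *
      ((y - H *ᵥ ν γ k) ⬝ᵥ ((H * Q γ * Hᵀ + (1 - γ)⁻¹ • R)⁻¹ *ᵥ (y - H *ᵥ ν γ k)))) := by
    rw [Finset.mul_sum]
    exact Finset.sum_congr rfl fun k _ => hwk k
  rw [hsum, mul_div_mul_left _ _ hc_pos.ne']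
  rfl
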